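/- arXiv:1401.3161 — 3 statements merged into one kernel-verified Lean document; each statement's English description precedes it below -/
import Mathlib

section
/- For |q| < 1 and |b| < 1 in ℝ (or ℂ), the reciprocal of the infinite product ∏_{i=0}^{n-1}(1 - q^i b) equals the convergent series ∑_{i=0}^{∞} (n+i-1 choose i)_q · b^i. -/
/-- The Gaussian binomial coefficient `(n choose k)_q`, defined by the
`q`-Pascal recursion. -/
def gaussBinom {R : Type*} [CommRing R] (q : R) : ℕ → ℕ → R
  | _, 0 => 1
  | 0, _ + 1 => 0
  | n + 1, k + 1 => gaussBinom q n (k + 1) * q ^ (k + 1) + gaussBinom q n k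

lemma gaussBinom_zero {R : Type*} [CommRing R] (q : R) (m : ℕ) : gaussBinom q m 0 = 1 := by
  cases m <;> rfl

lemma gaussBinom_succ {R : Type*} [CommRing R] (q : R) (n k : ℕ) :
    gaussBinom q (n+1) (k+1) = gaussBinom q n (k+1) * q ^ (k+1) + gaussBinom q n k := rfl

lemma gaussBinom_eq_zero {R : Type*} [CommRing R] (q : R) : ∀ m k, m < k → gaussBinom q m k = 0 := by
  intro m
  induction m with
  | zero =>
    intro k hk
    match k, hk with
    | k + 1, _ => rfl
  | succ m ih =>
    intro k hk
    match k, hk with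
    | k + 1, hk =>
      rw [gaussBinom_succ, ih (k+1) (by omega), ih k (by omega)]
      ring

lemma gaussBinom_aux {R : Type*} [CommRing R] (q : R) :
    ∀ k d, (q ^ (k+1) - 1) * gaussBinom q (k+d) (k+1) = (q ^ d - 1) * gaussBinom q (k+d) k := by
  intro k
  induction k with
  | zero =>
    intro d
    induction d with
    | zero => simp [gaussBinom_eq_zero q 0 1 (by omega)]
    | succ e ihe =>
      simp only [Nat.zero_add] at ihe ⊢
      rw [gaussBinom_zero] at ihe ⊢
      rw [show (e + 1) = e + 1 from rfl, gaussBinom_succ q e 0, gaussBinom_zero]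
      ring_nf
      ring_nf at ihe
      linear_combination q * ihe
  | succ j ihj =>
    intro d
    induction d with
    | zero =>
      rw [gaussBinom_eq_zero q (j+1+0) (j+1+1) (by omega)]
      simp
    | succ e ihe =>
      have h1 : gaussBinom q (j+1+(e+1)) (j+1+1) =
          gaussBinom q (j+1+e) (j+1+1) * q ^ (j+1+1) + gaussBinom q (j+1+e) (j+1) := by
        rw [show j+1+(e+1) = (j+1+e)+1 from by omega]
        exact gaussBinom_succ q (j+1+e) (j+1)
      have h2 : gaussBinom q (j+1+(e+1)) (j+1) =
          gaussBinom q (j+1+e) (j+1) * q ^ (j+1) + gaussBinom q (j+1+e) j := by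
        rw [show j+1+(e+1) = (j+1+e)+1 from by omega]
        exact gaussBinom_succ q (j+1+e) j
      have h3 := ihe  -- (q^(j+1+1)-1) * C(j+1+e, j+1+1) = (q^e-1) * C(j+1+e, j+1)
      have h4 := ihj (e+1)  -- (q^(j+1)-1) * C(j+(e+1), j+1) = (q^(e+1)-1) * C(j+(e+1), j)
      rw [show j+(e+1) = j+1+e from by omega] at h4
      rw [h1, h2]
      linear_combination q ^ (j+1+1) * h3 + h4

lemma gaussBinom_pascal2 {R : Type*} [CommRing R] (q : R) (k d : ℕ) :
    gaussBinom q (k+d+1) (k+1) = gaussBinom q (k+d) (k+1) + q ^ d * gaussBinom q (k+d) k := by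
  have h1 := gaussBinom_succ q (k+d) k
  have h2 := gaussBinom_aux q k d
  linear_combination h1 + h2
lemma gaussBinom_norm_le (q : ℂ) (hq : ‖q‖ ≤ 1) : ∀ m k, ‖gaussBinom q m k‖ ≤ (m.choose k : ℝ) := by
  intro m
  induction m with
  | zero =>
    intro k
    cases k with
    | zero => simp [gaussBinom_zero]
    | succ k => simp [gaussBinom_eq_zero q 0 (k+1) (by omega)]
  | succ m ih =>
    intro k
    cases k with
    | zero => simp [gaussBinom_zero]
    | succ k =>
      rw [gaussBinom_succ]
      calc ‖gaussBinom q m (k+1) * q ^ (k+1) + gaussBinom q m k‖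
          ≤ ‖gaussBinom q m (k+1)‖ * ‖q‖ ^ (k+1) + ‖gaussBinom q m k‖ := by
            refine (norm_add_le _ _).trans ?_
            rw [norm_mul, norm_pow]
        _ ≤ (m.choose (k+1) : ℝ) * 1 + (m.choose k : ℝ) := by
            gcongr
            · exact ih (k+1)
            · exact pow_le_one₀ (norm_nonneg q) hq
            · exact ih k
        _ = ((m+1).choose (k+1) : ℝ) := by
            rw [mul_one, Nat.choose_succ_succ]
            push_cast
            ring

lemma summable_norm_gauss (q b : ℂ) (hq : ‖q‖ ≤ 1) (hb : ‖b‖ < 1) (n : ℕ) :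
    Summable (fun i : ℕ => ‖gaussBinom q (n + i - 1) i * b ^ i‖) := by
  refine Summable.of_nonneg_of_le (fun i => norm_nonneg _)
    (f := fun i => ((i + n).choose n : ℝ) * ‖b‖ ^ i) (fun i => ?_) ?_
  · rw [norm_mul, norm_pow]
    refine mul_le_mul_of_nonneg_right ?_ (pow_nonneg (norm_nonneg b) i)
    calc ‖gaussBinom q (n + i - 1) i‖ ≤ ((n + i - 1).choose i : ℝ) := gaussBinom_norm_le q hq _ _
      _ ≤ ((n + i).choose i : ℝ) := by exact_mod_cast Nat.choose_le_choose i (by omega)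
      _ = ((i + n).choose n : ℝ) := by rw [Nat.add_comm n i, Nat.choose_symm_add]
  · have h : ‖(‖b‖)‖ < 1 := by rwa [Real.norm_eq_abs, abs_of_nonneg (norm_nonneg b)]
    exact summable_choose_mul_geometric_of_norm_lt_one n h

theorem inv_q_product_eq_tsum (q b : ℂ) (hq : ‖q‖ < 1) (hb : ‖b‖ < 1) (n : ℕ) :
    HasSum (fun i : ℕ => gaussBinom q (n + i - 1) i * b ^ i)
      (∏ i ∈ Finset.range n, (1 - q ^ i * b))⁻¹ := by
  have hq1 : ‖q‖ ≤ 1 := hq.le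
  induction n with
  | zero =>
    simp only [Finset.range_zero, Finset.prod_empty, inv_one]
    have he : (fun i : ℕ => gaussBinom q (0 + i - 1) i * b ^ i) =
        fun i : ℕ => if i = 0 then (1:ℂ) else 0 := by
      funext i
      cases i with
      | zero => simp [gaussBinom_zero]
      | succ j =>
        rw [show 0 + (j+1) - 1 = j from by omega, gaussBinom_eq_zero q j (j+1) (by omega)]
        simp
    rw [he]
    exact hasSum_ite_eq 0 1
  | succ n ih =>
    set f : ℕ → ℂ := fun i => gaussBinom q (n + i - 1) i * b ^ i with hfd
    have hsf : Summable fun i => ‖f i‖ := summable_norm_gauss q b hq1 hb n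
    have hlt : ‖q ^ n * b‖ < 1 := by
      rw [norm_mul, norm_pow]
      calc ‖q‖ ^ n * ‖b‖ ≤ 1 * ‖b‖ :=
            mul_le_mul_of_nonneg_right (pow_le_one₀ (norm_nonneg q) hq1) (norm_nonneg b)
        _ < 1 := by rwa [one_mul]
    have hg : HasSum (fun i : ℕ => (q ^ n * b) ^ i) (1 - q ^ n * b)⁻¹ :=
      hasSum_geometric_of_norm_lt_one hlt
    have hsg : Summable fun i => ‖(q ^ n * b) ^ i‖ := summable_norm_geometric_of_norm_lt_one hlt
    have hconv := hasSum_sum_range_mul_of_summable_norm hsf hsg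
    rw [ih.tsum_eq, hg.tsum_eq] at hconv
    have hterm : ∀ N : ℕ, ∑ k ∈ Finset.range (N+1), f k * (q ^ n * b) ^ (N - k)
        = gaussBinom q (n + 1 + N - 1) N * b ^ N := by
      intro N
      induction N with
      | zero => simp [hfd, gaussBinom_zero]
      | succ N ihN =>
        rw [Finset.sum_range_succ, Nat.sub_self, pow_zero, mul_one]
        have hstep : ∀ k ∈ Finset.range (N+1), f k * (q ^ n * b) ^ (N + 1 - k)
            = (q ^ n * b) * (f k * (q ^ n * b) ^ (N - k)) := by
          intro k hk
          rw [Finset.mem_range] at hk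
          rw [show N + 1 - k = (N - k) + 1 from by omega, pow_succ]
          ring
        rw [Finset.sum_congr rfl hstep, ← Finset.mul_sum, ihN]
        have hp := gaussBinom_pascal2 q N n
        rw [show n + 1 + N - 1 = N + n from by omega,
          show n + 1 + (N+1) - 1 = N + n + 1 from by omega, hp]
        simp only [hfd]
        rw [show n + (N+1) - 1 = N + n from by omega]
        ring
    rw [show (fun N => ∑ k ∈ Finset.range (N+1), f k * (q ^ n * b) ^ (N - k))
        = fun i : ℕ => gaussBinom q (n + 1 + i - 1) i * b ^ i from funext hterm] at hconv
    rw [Finset.prod_range_succ, mul_inv]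
    exact hconv
end

section
/- Equality of the multisum and single-sum representations: for r ∈ ℕ, h ∈ ℤ, x real, n ≥ 0, and 0 < q < 1, the r-fold sum 2^r ∑_{m_1,…,m_r=0}^∞ q^{∑_{l=1}^r (h-l) m_l} (-1)^{m_1+⋯+m_r} [x + m_1+⋯+m_r]_q^n equals the single sum 2^r ∑_{m=0}^∞ (m+r-1 choose m)_q q^{(h-r)m} (-1)^m [m+x]_q^n, both series converging absolutely. -/
/-- The `q`-number `[z]_q = (1 - q^z)/(1 - q)` for real `z` (with `q^z = exp(z log q)`). -/
noncomputable def qNum (q z : ℝ) : ℝ := (1 - q ^ z) / (1 - q)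

open Finset Real

lemma gb_zero_right {R : Type*} [CommRing R] (q : R) (n : ℕ) : gaussBinom q n 0 = 1 := by
  cases n <;> rfl

lemma gb_eq_zero {R : Type*} [CommRing R] (q : R) : ∀ {n k : ℕ}, n < k → gaussBinom q n k = 0
  | 0, _ + 1, _ => rfl
  | n + 1, k + 1, h => by
    rw [gaussBinom, gb_eq_zero q (by omega), gb_eq_zero q (by omega)]
    ring

lemma gb_diag {R : Type*} [CommRing R] (q : R) : ∀ n : ℕ, gaussBinom q n n = 1
  | 0 => rfl
  | n + 1 => by
    rw [gaussBinom, gb_eq_zero q (by omega), gb_diag q n]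
    ring

lemma gb_nonneg {q : ℝ} (hq : 0 ≤ q) : ∀ n k : ℕ, 0 ≤ gaussBinom q n k
  | _, 0 => by rw [gb_zero_right]; norm_num
  | 0, _ + 1 => le_of_eq rfl
  | n + 1, k + 1 => by
    rw [gaussBinom]
    have := gb_nonneg hq n (k + 1)
    have := gb_nonneg hq n k
    positivity

lemma gb_le_choose {q : ℝ} (hq : 0 ≤ q) (hq1 : q ≤ 1) :
    ∀ n k : ℕ, gaussBinom q n k ≤ n.choose k
  | _, 0 => by rw [gb_zero_right]; simp
  | 0, k + 1 => by rw [gb_eq_zero q (by omega)]; positivity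
  | n + 1, k + 1 => by
    rw [gaussBinom, Nat.choose_succ_succ']
    push_cast
    have h1 := gb_le_choose hq hq1 n (k + 1)
    have h2 := gb_le_choose hq hq1 n k
    have h3 : gaussBinom q n (k + 1) * q ^ (k + 1) ≤ gaussBinom q n (k + 1) * 1 :=
      mul_le_mul_of_nonneg_left (pow_le_one₀ hq hq1) (gb_nonneg hq n (k + 1))
    nlinarith [gb_nonneg hq n (k+1)]

lemma gb_sum {R : Type*} [CommRing R] (q : R) (r : ℕ) :
    ∀ M : ℕ, ∑ j ∈ range (M + 1), q ^ j * gaussBinom q (j + r) j = gaussBinom q (M + r + 1) M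
  | 0 => by simp [gb_zero_right]
  | M + 1 => by
    rw [Finset.sum_range_succ, gb_sum q r M]
    show gaussBinom q (M + r + 1) M + q ^ (M + 1) * gaussBinom q (M + 1 + r) (M + 1)
      = gaussBinom q (M + 1 + r + 1) (M + 1)
    have e1 : M + 1 + r + 1 = (M + r + 1) + 1 := by omega
    have e2 : M + 1 + r = M + r + 1 := by omega
    rw [e1, gaussBinom, e2]
    ring

lemma qNum_abs_le {q : ℝ} (hq0 : 0 < q) (hq1 : q < 1) (x : ℝ) {s : ℝ} (hs : 0 ≤ s) :
    |qNum q (x + s)| ≤ (1 + q ^ x) / (1 - q) := by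
  have h1 : (0:ℝ) < 1 - q := by linarith
  have h2 : (0:ℝ) < q ^ (x + s) := rpow_pos_of_pos hq0 _
  have h3 : q ^ (x + s) ≤ q ^ x := by
    rw [rpow_add hq0]
    nth_rewrite 2 [← mul_one (q ^ x)]
    exact mul_le_mul_of_nonneg_left (rpow_le_one hq0.le hq1.le hs)
      (rpow_pos_of_pos hq0 x).le
  rw [qNum, abs_div, abs_of_pos h1]
  gcongr
  rw [abs_sub_comm, abs_le]
  constructor <;> nlinarith

lemma summable_pi_geom {q : ℝ} (hq0 : 0 < q) (hq1 : q < 1) (r : ℕ) :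
    Summable (fun m : Fin r → ℕ => ∏ l, q ^ (m l)) := by
  induction r with
  | zero => apply Summable.of_finite
  | succ r ih =>
    have hg : Summable (fun k : ℕ => q ^ k) := summable_geometric_of_lt_one hq0.le hq1
    have hs : Summable (fun p : ℕ × (Fin r → ℕ) => q ^ p.1 * ∏ l, q ^ (p.2 l)) := by
      apply Summable.mul_of_nonneg hg ih
      · exact Pi.le_def.mpr fun k => by positivity
      · exact Pi.le_def.mpr fun v => Finset.prod_nonneg fun l _ => by positivity
    rw [← (Fin.insertNthEquiv (fun _ : Fin (r + 1) => ℕ) (Fin.last r)).summable_iff]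
    convert hs using 1
    funext p
    simp only [Function.comp, Fin.insertNthEquiv_apply]
    rw [Fin.prod_univ_castSucc, mul_comm]
    congr 1
    · rw [Fin.insertNth_apply_same]
    · exact Finset.prod_congr rfl fun l _ => by
        rw [← Fin.succAbove_last_apply, Fin.insertNth_apply_succAbove]

lemma rpow_sum_le_prod {q : ℝ} (hq0 : 0 < q) (hq1 : q < 1) {r : ℕ} {h : ℤ}
    (hh : (r : ℤ) < h) (m : Fin r → ℕ) :
    q ^ (∑ l : Fin r, ((h : ℝ) - (l.1 + 1)) * (m l : ℝ)) ≤ ∏ l, q ^ (m l) := by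
  have hb : ((∑ l, m l : ℕ) : ℝ) ≤ ∑ l : Fin r, ((h : ℝ) - (l.1 + 1)) * (m l : ℝ) := by
    push_cast
    apply Finset.sum_le_sum
    intro l _
    have hl : (l.1 : ℝ) + 1 ≤ r := by exact_mod_cast l.2
    have hrh : (r : ℝ) + 1 ≤ h := by exact_mod_cast hh
    nth_rewrite 1 [← one_mul ((m l : ℕ) : ℝ)]
    apply mul_le_mul_of_nonneg_right (by linarith) (by positivity)
  calc q ^ (∑ l : Fin r, ((h : ℝ) - (l.1 + 1)) * (m l : ℝ))
      ≤ q ^ (((∑ l, m l : ℕ) : ℝ)) := rpow_le_rpow_of_exponent_ge hq0 hq1.le hb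
    _ = ∏ l, q ^ (m l) := by
        rw [rpow_natCast, ← Finset.prod_pow_eq_pow_sum]

lemma summable_multi (q x : ℝ) (hq0 : 0 < q) (hq1 : q < 1)
    (r : ℕ) (h : ℤ) (hh : (r : ℤ) < h) (n : ℕ) :
    Summable (fun m : Fin r → ℕ =>
        q ^ (∑ l : Fin r, ((h : ℝ) - (l.1 + 1)) * (m l : ℝ)) *
          (-1 : ℝ) ^ (∑ l : Fin r, m l) * qNum q (x + (∑ l : Fin r, m l : ℕ)) ^ n) := by
  set B : ℝ := (1 + q ^ x) / (1 - q) with hB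
  have hBpos : 0 < B := by
    have : (0:ℝ) < q ^ x := rpow_pos_of_pos hq0 x
    have : (0:ℝ) < 1 - q := by linarith
    positivity
  apply Summable.of_norm_bounded (g := fun m : Fin r → ℕ => B ^ n * ∏ l, q ^ (m l))
    ((summable_pi_geom hq0 hq1 r).mul_left _)
  intro m
  rw [norm_mul, norm_mul, norm_pow, norm_neg, norm_one, one_pow, mul_one]
  have h1 : ‖q ^ (∑ l : Fin r, ((h : ℝ) - (l.1 + 1)) * (m l : ℝ))‖
      ≤ ∏ l, q ^ (m l) := by
    rw [Real.norm_eq_abs, abs_of_pos (rpow_pos_of_pos hq0 _)]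
    exact rpow_sum_le_prod hq0 hq1 hh m
  have h2 : ‖qNum q (x + (∑ l, m l : ℕ)) ^ n‖ ≤ B ^ n := by
    rw [norm_pow, Real.norm_eq_abs]
    exact pow_le_pow_left₀ (abs_nonneg _)
      (qNum_abs_le hq0 hq1 x (by positivity)) n
  calc ‖q ^ (∑ l : Fin r, ((h : ℝ) - (l.1 + 1)) * (m l : ℝ))‖ *
        ‖qNum q (x + (∑ l, m l : ℕ)) ^ n‖
      ≤ (∏ l, q ^ (m l)) * B ^ n := by
        apply mul_le_mul h1 h2 (norm_nonneg _)
        exact Finset.prod_nonneg fun l _ => by positivity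
    _ = B ^ n * ∏ l, q ^ (m l) := mul_comm _ _

lemma summable_aux_geo {q : ℝ} (hq0 : 0 < q) (hq1 : q < 1) (r : ℕ) :
    Summable (fun m : ℕ => ((m : ℝ) + 1) ^ r * q ^ m) := by
  have h1 : Summable (fun m : ℕ => (m : ℝ) ^ r * q ^ m) :=
    summable_pow_mul_geometric_of_norm_lt_one r (by rwa [Real.norm_eq_abs, abs_of_pos hq0])
  have h2 := (h1.comp_injective Nat.succ_injective).mul_left q⁻¹
  apply h2.congr
  intro m
  simp only [Function.comp, Nat.succ_eq_add_one]
  push_cast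
  rw [pow_succ]
  field_simp

lemma choose_bound (r' m : ℕ) : ((m + r').choose m : ℝ) ≤ ((r' + 1 : ℕ) * ((m : ℝ) + 1)) ^ (r' + 1) := by
  have h1 : (m + r').choose m = (m + r').choose r' := by
    have := Nat.choose_symm (n := m + r') (k := m) (by omega)
    simpa using this.symm
  have h2 : (m + r').choose r' ≤ (m + r') ^ r' := Nat.choose_le_pow _ _
  have h3 : (m + r') ^ r' ≤ ((r' + 1) * (m + 1)) ^ (r' + 1) := by
    calc (m + r') ^ r' ≤ ((r' + 1) * (m + 1)) ^ r' :=
          Nat.pow_le_pow_left (by nlinarith) r'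
      _ ≤ ((r' + 1) * (m + 1)) ^ (r' + 1) :=
          Nat.pow_le_pow_right (by positivity) (by omega)
  calc ((m + r').choose m : ℝ) ≤ (((r' + 1) * (m + 1)) ^ (r' + 1) : ℕ) := by
        exact_mod_cast h1 ▸ h2.trans h3
    _ = ((r' + 1 : ℕ) * ((m : ℝ) + 1)) ^ (r' + 1) := by push_cast; ring

lemma gb_bound {q : ℝ} (hq0 : 0 < q) (hq1 : q < 1) {r : ℕ} (hr : 1 ≤ r) (m : ℕ) :
    gaussBinom q (m + r - 1) m ≤ ((r : ℕ) * ((m : ℝ) + 1)) ^ r := by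
  obtain ⟨r', rfl⟩ : ∃ r', r = r' + 1 := ⟨r - 1, by omega⟩
  have : m + (r' + 1) - 1 = m + r' := by omega
  rw [this]
  exact (gb_le_choose hq0.le hq1.le (m + r') m).trans (choose_bound r' m)

lemma rpow_single_le {q : ℝ} (hq0 : 0 < q) (hq1 : q < 1) {r : ℕ} {h : ℤ}
    (hh : (r : ℤ) < h) (m : ℕ) : q ^ (((h : ℝ) - r) * m) ≤ q ^ m := by
  have hrh : (r : ℝ) + 1 ≤ h := by exact_mod_cast hh
  calc q ^ (((h : ℝ) - r) * m) ≤ q ^ ((m : ℕ) : ℝ) := by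
        apply rpow_le_rpow_of_exponent_ge hq0 hq1.le
        nth_rewrite 1 [← one_mul ((m : ℕ) : ℝ)]
        apply mul_le_mul_of_nonneg_right (by linarith) (by positivity)
    _ = q ^ m := rpow_natCast q m

lemma summable_single (q x : ℝ) (hq0 : 0 < q) (hq1 : q < 1)
    (r : ℕ) (hr : 1 ≤ r) (h : ℤ) (hh : (r : ℤ) < h) (n : ℕ) :
    Summable (fun m : ℕ =>
        gaussBinom q (m + r - 1) m * q ^ (((h : ℝ) - r) * m) * (-1 : ℝ) ^ m *
          qNum q (m + x) ^ n) := by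
  set B : ℝ := (1 + q ^ x) / (1 - q) with hB
  have hBpos : 0 < B := by
    have : (0:ℝ) < q ^ x := rpow_pos_of_pos hq0 x
    have : (0:ℝ) < 1 - q := by linarith
    positivity
  apply Summable.of_norm_bounded
    (g := fun m : ℕ => (B ^ n * (r : ℝ) ^ r) * (((m : ℝ) + 1) ^ r * q ^ m))
    ((summable_aux_geo hq0 hq1 r).mul_left _)
  intro m
  rw [norm_mul, norm_mul, norm_mul, norm_pow, norm_neg, norm_one, one_pow, mul_one]
  have h1 : ‖gaussBinom q (m + r - 1) m‖ ≤ ((r : ℕ) * ((m : ℝ) + 1)) ^ r := by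
    rw [Real.norm_eq_abs, abs_of_nonneg (gb_nonneg hq0.le _ _)]
    exact gb_bound hq0 hq1 hr m
  have h2 : ‖q ^ (((h : ℝ) - r) * m)‖ ≤ q ^ m := by
    rw [Real.norm_eq_abs, abs_of_pos (rpow_pos_of_pos hq0 _)]
    exact rpow_single_le hq0 hq1 hh m
  have h3 : ‖qNum q (m + x) ^ n‖ ≤ B ^ n := by
    rw [norm_pow, Real.norm_eq_abs, add_comm (m : ℝ) x]
    exact pow_le_pow_left₀ (abs_nonneg _) (qNum_abs_le hq0 hq1 x (by positivity)) n
  calc ‖gaussBinom q (m + r - 1) m‖ * ‖q ^ (((h : ℝ) - r) * m)‖ * ‖qNum q (m + x) ^ n‖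
      ≤ ((r : ℕ) * ((m : ℝ) + 1)) ^ r * q ^ m * B ^ n := by
        apply mul_le_mul (mul_le_mul h1 h2 (norm_nonneg _) (by positivity)) h3
          (norm_nonneg _) (by positivity)
    _ = (B ^ n * (r : ℝ) ^ r) * (((m : ℝ) + 1) ^ r * q ^ m) := by
        rw [mul_pow]
        ring

lemma summable_double (q x : ℝ) (hq0 : 0 < q) (hq1 : q < 1)
    (r : ℕ) (hr : 1 ≤ r) (h : ℤ) (hh : ((r : ℤ) + 1) < h) (n : ℕ) :
    Summable (fun p : ℕ × ℕ =>
      q ^ (((h : ℝ) - ((r : ℕ) + 1 : ℕ)) * p.1) * (-1 : ℝ) ^ p.1 *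
        (gaussBinom q (p.2 + r - 1) p.2 * q ^ (((h : ℝ) - r) * p.2) * (-1 : ℝ) ^ p.2 *
          qNum q (p.2 + (x + p.1)) ^ n)) := by
  set B : ℝ := (1 + q ^ x) / (1 - q) with hB
  have hBpos : 0 < B := by
    have : (0:ℝ) < q ^ x := rpow_pos_of_pos hq0 x
    have : (0:ℝ) < 1 - q := by linarith
    positivity
  have hsum : Summable (fun p : ℕ × ℕ =>
      q ^ p.1 * ((B ^ n * (r : ℝ) ^ r) * (((p.2 : ℝ) + 1) ^ r * q ^ p.2))) := by
    apply Summable.mul_of_nonneg (summable_geometric_of_lt_one hq0.le hq1)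
      ((summable_aux_geo hq0 hq1 r).mul_left _)
    · exact Pi.le_def.mpr fun k => by positivity
    · exact Pi.le_def.mpr fun m => by positivity
  apply Summable.of_norm_bounded hsum
  rintro ⟨k, m⟩
  simp only
  have h0 : ‖q ^ (((h : ℝ) - ((r : ℕ) + 1 : ℕ)) * k)‖ ≤ q ^ k := by
    rw [Real.norm_eq_abs, abs_of_pos (rpow_pos_of_pos hq0 _)]
    exact rpow_single_le hq0 hq1 (by exact_mod_cast hh) k
  have h1 : ‖gaussBinom q (m + r - 1) m‖ ≤ ((r : ℕ) * ((m : ℝ) + 1)) ^ r := by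
    rw [Real.norm_eq_abs, abs_of_nonneg (gb_nonneg hq0.le _ _)]
    exact gb_bound hq0 hq1 hr m
  have h2 : ‖q ^ (((h : ℝ) - r) * m)‖ ≤ q ^ m := by
    rw [Real.norm_eq_abs, abs_of_pos (rpow_pos_of_pos hq0 _)]
    exact rpow_single_le hq0 hq1 (by omega) m
  have h3 : ‖qNum q (m + (x + k))‖ ^ n ≤ B ^ n := by
    rw [Real.norm_eq_abs]
    have harg : ((m : ℝ) + (x + k)) = x + ((m : ℝ) + k) := by ring
    rw [harg]
    exact pow_le_pow_left₀ (abs_nonneg _) (qNum_abs_le hq0 hq1 x (by positivity)) n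
  simp only [norm_mul, norm_pow, norm_neg, norm_one, one_pow, mul_one]
  calc ‖q ^ (((h : ℝ) - ((r : ℕ) + 1 : ℕ)) * k)‖ *
        (‖gaussBinom q (m + r - 1) m‖ * ‖q ^ (((h : ℝ) - r) * m)‖ * ‖qNum q (m + (x + k))‖ ^ n)
      ≤ q ^ k * (((r : ℕ) * ((m : ℝ) + 1)) ^ r * q ^ m * B ^ n) := by
        apply mul_le_mul h0 ?_ (by positivity) (by positivity)
        apply mul_le_mul (mul_le_mul h1 h2 (norm_nonneg _) (by positivity)) h3
          (by positivity) (by positivity)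
    _ = q ^ k * ((B ^ n * (r : ℝ) ^ r) * (((m : ℝ) + 1) ^ r * q ^ m)) := by
        rw [mul_pow]; ring

lemma antidiag_sum (q x : ℝ) (hq0 : 0 < q) (r : ℕ) (hr : 1 ≤ r) (h : ℤ) (n M : ℕ) :
    ∑ p ∈ Finset.HasAntidiagonal.antidiagonal M,
      q ^ (((h : ℝ) - ((r + 1 : ℕ) : ℝ)) * p.1) * (-1 : ℝ) ^ p.1 *
        (gaussBinom q (p.2 + r - 1) p.2 * q ^ (((h : ℝ) - r) * p.2) * (-1 : ℝ) ^ p.2 *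
          qNum q (p.2 + (x + p.1)) ^ n)
    = gaussBinom q (M + (r + 1) - 1) M * q ^ (((h : ℝ) - ((r + 1 : ℕ) : ℝ)) * M) *
        (-1 : ℝ) ^ M * qNum q (M + x) ^ n := by
  rw [Finset.Nat.sum_antidiagonal_eq_sum_range_succ_mk]
  have hterm : ∀ k ∈ range (M + 1),
      q ^ (((h : ℝ) - ((r + 1 : ℕ) : ℝ)) * k) * (-1 : ℝ) ^ k *
        (gaussBinom q ((M - k) + r - 1) (M - k) * q ^ (((h : ℝ) - r) * (M - k : ℕ)) *
          (-1 : ℝ) ^ (M - k : ℕ) * qNum q ((M - k : ℕ) + (x + k)) ^ n)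
      = (q ^ (((h : ℝ) - ((r + 1 : ℕ) : ℝ)) * M) * (-1 : ℝ) ^ M * qNum q (M + x) ^ n) *
          (q ^ (M - k) * gaussBinom q ((M - k) + (r - 1)) (M - k)) := by
    intro k hk
    rw [Finset.mem_range] at hk
    have hk' : k ≤ M := by omega
    have e1 : q ^ (((h : ℝ) - ((r + 1 : ℕ) : ℝ)) * k) * q ^ (((h : ℝ) - r) * (M - k : ℕ))
        = q ^ (((h : ℝ) - ((r + 1 : ℕ) : ℝ)) * M) * q ^ (M - k : ℕ) := by
      rw [← rpow_natCast q (M - k), ← rpow_add hq0, ← rpow_add hq0]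
      congr 1
      push_cast [Nat.cast_sub hk']
      ring
    have e2 : ((-1 : ℝ)) ^ k * (-1 : ℝ) ^ (M - k : ℕ) = (-1 : ℝ) ^ M := by
      rw [← pow_add]
      congr 1
      omega
    have e3 : qNum q ((M - k : ℕ) + (x + k)) = qNum q (M + x) := by
      congr 1
      push_cast [Nat.cast_sub hk']
      ring
    have e4 : (M - k) + r - 1 = (M - k) + (r - 1) := by omega
    rw [e3, e4]
    calc q ^ (((h : ℝ) - ((r + 1 : ℕ) : ℝ)) * k) * (-1 : ℝ) ^ k *
          (gaussBinom q ((M - k) + (r - 1)) (M - k) * q ^ (((h : ℝ) - r) * (M - k : ℕ)) *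
            (-1 : ℝ) ^ (M - k : ℕ) * qNum q (M + x) ^ n)
        = (q ^ (((h : ℝ) - ((r + 1 : ℕ) : ℝ)) * k) * q ^ (((h : ℝ) - r) * (M - k : ℕ))) *
            ((-1 : ℝ) ^ k * (-1 : ℝ) ^ (M - k : ℕ)) * qNum q (M + x) ^ n *
            gaussBinom q ((M - k) + (r - 1)) (M - k) := by ring
      _ = _ := by rw [e1, e2]; ring
  rw [Finset.sum_congr rfl hterm, ← Finset.mul_sum]
  have hrefl : ∀ i ∈ range (M + 1), q ^ (M - i) * gaussBinom q ((M - i) + (r - 1)) (M - i)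
      = (fun j => q ^ j * gaussBinom q (j + (r - 1)) j) (M + 1 - 1 - i) := by
    intro i _
    simp
  rw [Finset.sum_congr rfl hrefl,
    Finset.sum_range_reflect (fun j => q ^ j * gaussBinom q (j + (r - 1)) j) (M + 1),
    gb_sum q (r - 1) M]
  have e5 : M + (r - 1) + 1 = M + (r + 1) - 1 := by omega
  rw [e5]
  ring

lemma prod_to_single (F : ℕ × ℕ → ℝ) (hF : Summable F) :
    ∑' p : ℕ × ℕ, F p = ∑' M : ℕ, ∑ p ∈ Finset.HasAntidiagonal.antidiagonal M, F p := by
  rw [← Finset.HasAntidiagonal.sigmaAntidiagonalEquivProd.tsum_eq F]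
  have hg : Summable (fun c : (Σ M : ℕ, {p : ℕ × ℕ // p ∈ Finset.HasAntidiagonal.antidiagonal M}) =>
      F (Finset.HasAntidiagonal.sigmaAntidiagonalEquivProd c)) :=
    Finset.HasAntidiagonal.sigmaAntidiagonalEquivProd.summable_iff.mpr hF
  rw [Summable.tsum_sigma hg]
  exact tsum_congr fun M => (tsum_congr fun c => rfl).trans (Finset.tsum_subtype _ _)

lemma key (q : ℝ) (hq0 : 0 < q) (hq1 : q < 1) (n : ℕ) :
    ∀ r : ℕ, 1 ≤ r → ∀ h : ℤ, (r : ℤ) < h → ∀ x : ℝ,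
    (∑' m : Fin r → ℕ,
        q ^ (∑ l : Fin r, ((h : ℝ) - (l.1 + 1)) * (m l : ℝ)) *
          (-1 : ℝ) ^ (∑ l : Fin r, m l) * qNum q (x + (∑ l : Fin r, m l : ℕ)) ^ n)
      = ∑' m : ℕ,
          gaussBinom q (m + r - 1) m * q ^ (((h : ℝ) - r) * m) * (-1 : ℝ) ^ m *
            qNum q (m + x) ^ n := by
  intro r
  induction r with
  | zero => omega
  | succ r ih =>
    intro _ h hh x
    rcases Nat.eq_zero_or_pos r with hr0 | hrpos
    · subst hr0
      rw [← ((Equiv.funUnique (Fin 1) ℕ).symm.tsum_eq (fun m : Fin 1 → ℕ =>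
          q ^ (∑ l : Fin 1, ((h : ℝ) - (l.1 + 1)) * (m l : ℝ)) *
            (-1 : ℝ) ^ (∑ l : Fin 1, m l) * qNum q (x + (∑ l : Fin 1, m l : ℕ)) ^ n))]
      apply tsum_congr
      intro k
      have e0 : ∀ l : Fin 1, ((Equiv.funUnique (Fin 1) ℕ).symm k) l = k := fun _ => rfl
      simp only [e0, Fin.sum_univ_one, Fin.val_zero, Nat.add_sub_cancel, gb_diag, one_mul,
        Nat.cast_zero, Nat.cast_one, zero_add]
      rw [add_comm x (k : ℝ)]
    · -- inductive step, r ≥ 1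
      have hr1 : (r : ℤ) < h := by omega
      set E := Fin.insertNthEquiv (fun _ : Fin (r + 1) => ℕ) (Fin.last r) with hE
      rw [← (E.tsum_eq (fun m : Fin (r + 1) → ℕ =>
          q ^ (∑ l : Fin (r + 1), ((h : ℝ) - (l.1 + 1)) * (m l : ℝ)) *
            (-1 : ℝ) ^ (∑ l : Fin (r + 1), m l) *
            qNum q (x + (∑ l : Fin (r + 1), m l : ℕ)) ^ n))]
      have hpt : ∀ p : ℕ × (Fin r → ℕ),
          q ^ (∑ l : Fin (r + 1), ((h : ℝ) - (l.1 + 1)) * ((E p) l : ℝ)) *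
            (-1 : ℝ) ^ (∑ l : Fin (r + 1), (E p) l) *
            qNum q (x + (∑ l : Fin (r + 1), (E p) l : ℕ)) ^ n
          = q ^ (((h : ℝ) - ((r + 1 : ℕ) : ℝ)) * p.1) * (-1 : ℝ) ^ p.1 *
              (q ^ (∑ l : Fin r, ((h : ℝ) - (l.1 + 1)) * (p.2 l : ℝ)) *
                (-1 : ℝ) ^ (∑ l : Fin r, p.2 l) *
                qNum q ((x + p.1) + (∑ l : Fin r, p.2 l : ℕ)) ^ n) := by
        intro p
        have hlast : E p (Fin.last r) = p.1 := by
          rw [hE, Fin.insertNthEquiv_apply, Fin.insertNth_apply_same]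
        have hcast : ∀ l : Fin r, E p (Fin.castSucc l) = p.2 l := fun l => by
          rw [hE, Fin.insertNthEquiv_apply, ← Fin.succAbove_last_apply,
            Fin.insertNth_apply_succAbove]
        have sum1 : ∑ l : Fin (r + 1), ((h : ℝ) - (l.1 + 1)) * ((E p) l : ℝ)
            = ((h : ℝ) - ((r + 1 : ℕ) : ℝ)) * p.1
              + ∑ l : Fin r, ((h : ℝ) - (l.1 + 1)) * (p.2 l : ℝ) := by
          rw [Fin.sum_univ_castSucc]
          simp only [hlast, hcast, Fin.coe_castSucc, Fin.val_last]
          push_cast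
          ring
        have sum2 : ∑ l : Fin (r + 1), (E p) l = (∑ l : Fin r, p.2 l) + p.1 := by
          rw [Fin.sum_univ_castSucc]
          simp only [hlast, hcast]
        rw [sum1, sum2, rpow_add hq0, pow_add]
        have harg : x + ((∑ l : Fin r, p.2 l) + p.1 : ℕ)
            = (x + p.1) + ((∑ l : Fin r, p.2 l : ℕ) : ℝ) := by
          push_cast
          ring
        rw [harg]
        ring
      rw [tsum_congr hpt]
      have hG : Summable (fun p : ℕ × (Fin r → ℕ) =>
          q ^ (((h : ℝ) - ((r + 1 : ℕ) : ℝ)) * p.1) * (-1 : ℝ) ^ p.1 *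
            (q ^ (∑ l : Fin r, ((h : ℝ) - (l.1 + 1)) * (p.2 l : ℝ)) *
              (-1 : ℝ) ^ (∑ l : Fin r, p.2 l) *
              qNum q ((x + p.1) + (∑ l : Fin r, p.2 l : ℕ)) ^ n)) := by
        have h0 := E.summable_iff.mpr (summable_multi q x hq0 hq1 (r + 1) h hh n)
        exact h0.congr hpt
      rw [Summable.tsum_prod hG]
      have hstep : ∀ k : ℕ,
          (∑' v : Fin r → ℕ,
            q ^ (((h : ℝ) - ((r + 1 : ℕ) : ℝ)) * k) * (-1 : ℝ) ^ k *
              (q ^ (∑ l : Fin r, ((h : ℝ) - (l.1 + 1)) * (v l : ℝ)) *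
                (-1 : ℝ) ^ (∑ l : Fin r, v l) *
                qNum q ((x + k) + (∑ l : Fin r, v l : ℕ)) ^ n))
          = ∑' m : ℕ,
              q ^ (((h : ℝ) - ((r + 1 : ℕ) : ℝ)) * k) * (-1 : ℝ) ^ k *
                (gaussBinom q (m + r - 1) m * q ^ (((h : ℝ) - r) * m) * (-1 : ℝ) ^ m *
                  qNum q (m + (x + k)) ^ n) := by
        intro k
        rw [tsum_mul_left, ih hrpos h hr1 (x + k), ← tsum_mul_left]
      rw [tsum_congr hstep]
      have hF : Summable (fun p : ℕ × ℕ =>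
          q ^ (((h : ℝ) - ((r + 1 : ℕ) : ℝ)) * p.1) * (-1 : ℝ) ^ p.1 *
            (gaussBinom q (p.2 + r - 1) p.2 * q ^ (((h : ℝ) - r) * p.2) * (-1 : ℝ) ^ p.2 *
              qNum q (p.2 + (x + p.1)) ^ n)) :=
        summable_double q x hq0 hq1 r hrpos h (by exact_mod_cast hh) n
      rw [← Summable.tsum_prod hF, prod_to_single _ hF]
      exact tsum_congr fun M => antidiag_sum q x hq0 r hrpos h n M

theorem multisum_eq_single_sum (q x : ℝ) (hq0 : 0 < q) (hq1 : q < 1)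
    (r : ℕ) (hr : 1 ≤ r) (h : ℤ) (hh : (r : ℤ) < h) (n : ℕ) :
    Summable (fun m : Fin r → ℕ =>
        q ^ (∑ l : Fin r, ((h : ℝ) - (l.1 + 1)) * (m l : ℝ)) *
          (-1 : ℝ) ^ (∑ l : Fin r, m l) * qNum q (x + (∑ l : Fin r, m l : ℕ)) ^ n) ∧
    Summable (fun m : ℕ =>
        gaussBinom q (m + r - 1) m * q ^ (((h : ℝ) - r) * m) * (-1 : ℝ) ^ m *
          qNum q (m + x) ^ n) ∧
    (2 : ℝ) ^ r * ∑' m : Fin r → ℕ,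
        q ^ (∑ l : Fin r, ((h : ℝ) - (l.1 + 1)) * (m l : ℝ)) *
          (-1 : ℝ) ^ (∑ l : Fin r, m l) * qNum q (x + (∑ l : Fin r, m l : ℕ)) ^ n
      = (2 : ℝ) ^ r * ∑' m : ℕ,
          gaussBinom q (m + r - 1) m * q ^ (((h : ℝ) - r) * m) * (-1 : ℝ) ^ m *
            qNum q (m + x) ^ n := by
  refine ⟨summable_multi q x hq0 hq1 r h hh n, summable_single q x hq0 hq1 r hr h hh n, ?_⟩
  rw [key q hq0 hq1 n r hr h hh x]
end

section
/- Second symmetry identity (Theorem 4): for n ≥ 0, odd w₁, w₂ ∈ ℕ, r ≥ 1, h ∈ ℤ, 0 < q < 1, real x: ∑_{i=0}^{n} (n choose i) [w₂]_q^i [w₁]_q^{n−i} E_{n−i,q^{w₁}}^{(h,r)}(w₂x) T_{n,i,q^{w₂}}^{(h,r)}(w₁) = ∑_{i=0}^{n} (n choose i) [w₁]_q^i [w₂]_q^{n−i} E_{n−i,q^{w₂}}^{(h,r)}(w₁x) T_{n,i,q^{w₁}}^{(h,r)}(w₂). -/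
/-- The `q`-Euler polynomial of order `r`. -/
noncomputable def qEuler (q : ℝ) (h : ℤ) (r n : ℕ) (y : ℝ) : ℝ :=
  2 ^ r * ∑' m : Fin r → ℕ,
    q ^ (∑ l : Fin r, ((h : ℝ) - (l.1 + 1)) * (m l : ℝ)) *
      (-1 : ℝ) ^ (∑ l : Fin r, m l) * qNum q (y + (∑ l : Fin r, m l : ℕ)) ^ n

/-- `T_{n,i,q}^{(h,r)}(w) = ∑_{j_1,…,j_r=0}^{w-1} (-1)^{∑ j_l} q^{∑ (n+h-l-i) j_l}
  [j_1+⋯+j_r]_q^i`. -/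
noncomputable def Tsum (q : ℝ) (h : ℤ) (r n i w : ℕ) : ℝ :=
  ∑ j : Fin r → Fin w,
    (-1 : ℝ) ^ (∑ l : Fin r, (j l : ℕ)) *
      q ^ (∑ l : Fin r, ((n : ℝ) + h - (l.1 + 1) - i) * (j l : ℕ)) *
      qNum q (∑ l : Fin r, (j l : ℕ) : ℕ) ^ i

lemma qNum_add {q : ℝ} (hq0 : 0 < q) (A B : ℝ) :
    qNum q (A + B) = qNum q B + q ^ B * qNum q A := by
  unfold qNum
  rw [Real.rpow_add hq0]
  ring

lemma npow_rpow {q : ℝ} (hq0 : 0 ≤ q) (u : ℕ) (e : ℝ) :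
    ((q ^ u : ℝ)) ^ e = q ^ ((u : ℝ) * e) := by
  rw [← Real.rpow_natCast q u, ← Real.rpow_mul hq0]

lemma rpow_npow {q : ℝ} (hq0 : 0 ≤ q) (B : ℝ) (k : ℕ) :
    ((q ^ B : ℝ)) ^ k = q ^ (B * k) := by
  rw [← Real.rpow_natCast (q ^ B) k, ← Real.rpow_mul hq0]

lemma qNum_nat_mul {q : ℝ} (hq0 : 0 < q) (hq1 : q < 1) {u : ℕ} (hu : 0 < u) (z : ℝ) :
    qNum q u * qNum (q ^ u) z = qNum q ((u : ℝ) * z) := by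
  have hqu : (q : ℝ) ^ u < 1 := pow_lt_one₀ hq0.le hq1 hu.ne'
  have h1 : (1 : ℝ) - q ≠ 0 := by linarith
  have h2 : (1 : ℝ) - q ^ u ≠ 0 := by linarith
  unfold qNum
  rw [npow_rpow hq0.le, Real.rpow_natCast]
  field_simp

lemma abs_qNum_le {q : ℝ} (hq0 : 0 < q) (hq1 : q < 1) (y : ℝ) (N : ℕ) :
    |qNum q (y + N)| ≤ (1 + q ^ y) / (1 - q) := by
  have h1 : (0:ℝ) < 1 - q := by linarith
  have hy : (0:ℝ) < q ^ y := Real.rpow_pos_of_pos hq0 y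
  have h2 : q ^ (y + (N:ℝ)) ≤ q ^ y := by
    rw [Real.rpow_add hq0, Real.rpow_natCast]
    nlinarith [pow_le_one₀ hq0.le hq1.le (n := N), pow_pos hq0 N]
  have h3 : (0:ℝ) < q ^ (y + (N:ℝ)) := Real.rpow_pos_of_pos hq0 _
  rw [qNum, abs_div, abs_of_pos h1, div_le_div_iff_of_pos_right h1]
  rw [abs_le]
  constructor <;> nlinarith

lemma summable_base {q : ℝ} (hq0 : 0 ≤ q) (hq1 : q < 1) :
    ∀ r : ℕ, Summable (fun m : Fin r → ℕ => q ^ (∑ l, m l)) := by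
  intro r
  induction r with
  | zero =>
      exact Summable.of_finite
  | succ r ih =>
      have h := (summable_geometric_of_lt_one hq0 hq1).mul_of_nonneg ih
        (fun k => pow_nonneg hq0 k) (fun m => pow_nonneg hq0 _)
      have := h.comp_injective (Fin.consEquiv fun _ => ℕ).symm.injective
      refine this.congr fun m => ?_
      simp only [Function.comp, Fin.consEquiv, Equiv.coe_fn_symm_mk, Fin.sum_univ_succ, pow_add,
        Fin.tail]

def swapPair (u v : ℕ) (hv : 0 < v) : ℕ × Fin u → ℕ × Fin v :=
  fun p => (u * (p.1 / v) + (p.2 : ℕ), ⟨p.1 % v, Nat.mod_lt _ hv⟩)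

lemma swapPair_invol {u v : ℕ} (hu : 0 < u) (hv : 0 < v) (p : ℕ × Fin u) :
    swapPair v u hu (swapPair u v hv p) = p := by
  obtain ⟨m, j⟩ := p
  have hj : (j : ℕ) < u := j.2
  unfold swapPair
  have h1 : (u * (m / v) + (j : ℕ)) / u = m / v := by
    rw [Nat.mul_add_div hu, Nat.div_eq_of_lt hj, add_zero]
  have h2 : (u * (m / v) + (j : ℕ)) % u = (j : ℕ) := by
    rw [Nat.mul_add_mod, Nat.mod_eq_of_lt hj]
  ext
  · simp [h1, h2, Nat.div_add_mod]
  · simp [h1, h2]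

lemma swapPair_val {u v : ℕ} (hv : 0 < v) (p : ℕ × Fin u) :
    v * (swapPair u v hv p).1 + u * ((swapPair u v hv p).2 : ℕ)
      = u * p.1 + v * (p.2 : ℕ) := by
  obtain ⟨m, j⟩ := p
  unfold swapPair
  simp only
  calc v * (u * (m / v) + (j : ℕ)) + u * (m % v)
      = u * (v * (m / v) + m % v) + v * (j : ℕ) := by ring
    _ = u * m + v * (j : ℕ) := by rw [Nat.div_add_mod]

def swapEquiv (u v : ℕ) (hu : 0 < u) (hv : 0 < v) : ℕ × Fin u ≃ ℕ × Fin v where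
  toFun := swapPair u v hv
  invFun := swapPair v u hu
  left_inv p := swapPair_invol hu hv p
  right_inv p := swapPair_invol hv hu p

lemma neg_one_pow_congr' {a b : ℕ} (hab : a % 2 = b % 2) : ((-1 : ℝ)) ^ a = (-1) ^ b := by
  conv_lhs => rw [← Nat.div_add_mod a 2]
  conv_rhs => rw [← Nat.div_add_mod b 2]
  rw [hab, pow_add, pow_add, pow_mul, pow_mul]
  norm_num

noncomputable def master (q : ℝ) (h : ℤ) (r n : ℕ) (x : ℝ) (u v : ℕ) : ℝ :=
  2 ^ r * ∑' p : (Fin r → ℕ) × (Fin r → Fin u),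
    (-1 : ℝ) ^ ((∑ l, p.1 l) + ∑ l, ((p.2 l : ℕ))) *
      q ^ (∑ l : Fin r, ((h : ℝ) - (l.1 + 1)) * (((u * p.1 l + v * (p.2 l : ℕ) : ℕ)) : ℝ)) *
      qNum q ((u : ℝ) * (v : ℝ) * x + (((∑ l, (u * p.1 l + v * (p.2 l : ℕ)) : ℕ)) : ℝ)) ^ n

lemma parity_helper {u v a b c d : ℕ} (hu : u % 2 = 1) (hv : v % 2 = 1)
    (hval : v * a + u * b = u * c + v * d) : (a + b) % 2 = (c + d) % 2 := by
  have h1 : (v * a) % 2 = a % 2 := by rw [Nat.mul_mod, hv, one_mul]; omega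
  have h2 : (u * b) % 2 = b % 2 := by rw [Nat.mul_mod, hu, one_mul]; omega
  have h3 : (u * c) % 2 = c % 2 := by rw [Nat.mul_mod, hu, one_mul]; omega
  have h4 : (v * d) % 2 = d % 2 := by rw [Nat.mul_mod, hv, one_mul]; omega
  generalize v * a = a' at h1 hval
  generalize u * b = b' at h2 hval
  generalize u * c = c' at h3 hval
  generalize v * d = d' at h4 hval
  omega

def swapBig (r u v : ℕ) (hu : 0 < u) (hv : 0 < v) :
    ((Fin r → ℕ) × (Fin r → Fin u)) ≃ ((Fin r → ℕ) × (Fin r → Fin v)) where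
  toFun p := (fun l => (swapPair u v hv (p.1 l, p.2 l)).1,
              fun l => (swapPair u v hv (p.1 l, p.2 l)).2)
  invFun p := (fun l => (swapPair v u hu (p.1 l, p.2 l)).1,
               fun l => (swapPair v u hu (p.1 l, p.2 l)).2)
  left_inv p := by
    obtain ⟨m, j⟩ := p
    simp only [Prod.mk.injEq]
    exact ⟨funext fun l => congrArg Prod.fst (swapPair_invol hu hv (m l, j l)),
           funext fun l => congrArg Prod.snd (swapPair_invol hu hv (m l, j l))⟩
  right_inv p := by
    obtain ⟨m, j⟩ := p
    simp only [Prod.mk.injEq]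
    exact ⟨funext fun l => congrArg Prod.fst (swapPair_invol hv hu (m l, j l)),
           funext fun l => congrArg Prod.snd (swapPair_invol hv hu (m l, j l))⟩

lemma master_symm (q : ℝ) (h : ℤ) (r n : ℕ) (x : ℝ) (u v : ℕ)
    (hu : 0 < u) (hv : 0 < v) (hou : Odd u) (hov : Odd v) :
    master q h r n x u v = master q h r n x v u := by
  unfold master
  congr 1
  rw [← Equiv.tsum_eq (swapBig r u v hu hv)]
  apply tsum_congr
  intro p
  obtain ⟨m, j⟩ := p
  set m' : Fin r → ℕ := fun l => (swapPair u v hv (m l, j l)).1 with hm'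
  set j' : Fin r → Fin v := fun l => (swapPair u v hv (m l, j l)).2 with hj'
  have happ : swapBig r u v hu hv (m, j) = (m', j') := rfl
  rw [happ]
  have hval : ∀ l, v * m' l + u * ((j' l : ℕ)) = u * m l + v * ((j l : ℕ)) :=
    fun l => swapPair_val hv (m l, j l)
  have hsum : (∑ l, (v * m' l + u * ((j' l : ℕ)))) = ∑ l, (u * m l + v * ((j l : ℕ))) :=
    Finset.sum_congr rfl fun l _ => hval l
  have hsum2 : v * (∑ l, m' l) + u * (∑ l, ((j' l : ℕ)))
      = u * (∑ l, m l) + v * (∑ l, ((j l : ℕ))) := by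
    rw [Finset.mul_sum, Finset.mul_sum, Finset.mul_sum, Finset.mul_sum,
      ← Finset.sum_add_distrib, ← Finset.sum_add_distrib] at *
    exact hsum
  have hpar : ((∑ l, m' l) + ∑ l, ((j' l : ℕ))) % 2 = ((∑ l, m l) + ∑ l, ((j l : ℕ))) % 2 :=
    parity_helper (Nat.odd_iff.mp hou) (Nat.odd_iff.mp hov) hsum2
  congr 1
  · congr 1
    · exact neg_one_pow_congr' hpar.symm
    · congr 1
      refine Finset.sum_congr rfl fun l _ => ?_
      congr 1
      exact_mod_cast congrArg (Nat.cast : ℕ → ℝ) (hval l).symm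
  · congr 2
    show (u : ℝ) * v * x + ((∑ l, (u * m l + v * ((j l : ℕ))) : ℕ) : ℝ)
        = (v : ℝ) * u * x + ((∑ l, (v * m' l + u * ((j' l : ℕ))) : ℕ) : ℝ)
    rw [hsum]
    ring

noncomputable def Em (q : ℝ) (h : ℤ) (r : ℕ) (x : ℝ) (u v k : ℕ) (m : Fin r → ℕ) : ℝ :=
  q ^ ((u : ℝ) * ∑ l : Fin r, ((h : ℝ) - (l.1 + 1)) * (m l : ℝ)) * (-1) ^ (∑ l, m l) *
    qNum q ((u : ℝ) * (v : ℝ) * x + (u : ℝ) * ((∑ l, m l : ℕ) : ℝ)) ^ k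

noncomputable def Tj (q : ℝ) (h : ℤ) (r u v i k : ℕ) (j : Fin r → Fin u) : ℝ :=
  (-1) ^ (∑ l, ((j l : ℕ))) *
    q ^ ((v : ℝ) * ∑ l : Fin r, ((h : ℝ) - (l.1 + 1)) * ((j l : ℕ) : ℝ)) *
    qNum q ((v : ℝ) * ((∑ l, ((j l : ℕ)) : ℕ) : ℝ)) ^ i *
    (q ^ ((v : ℝ) * ((∑ l, ((j l : ℕ)) : ℕ) : ℝ))) ^ k

lemma Em_factor {q x : ℝ} {h : ℤ} {r u v : ℕ} (hq0 : 0 < q) (hq1 : q < 1) (hu : 0 < u)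
    (k : ℕ) (m : Fin r → ℕ) :
    Em q h r x u v k m
      = qNum q u ^ k *
        ((q ^ u : ℝ) ^ (∑ l : Fin r, ((h : ℝ) - (l.1 + 1)) * (m l : ℝ)) *
          (-1 : ℝ) ^ (∑ l : Fin r, m l) *
          qNum (q ^ u) ((v : ℝ) * x + (∑ l : Fin r, m l : ℕ)) ^ k) := by
  have hb : ((u : ℝ)) * ((v : ℝ) * x + ((∑ l, m l : ℕ) : ℝ))
      = (u : ℝ) * (v : ℝ) * x + (u : ℝ) * ((∑ l, m l : ℕ) : ℝ) := by ring
  unfold Em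
  rw [npow_rpow hq0.le, ← hb, ← qNum_nat_mul hq0 hq1 hu, mul_pow]
  ring

lemma Tj_factor {q : ℝ} {h : ℤ} {r u v n : ℕ} (hq0 : 0 < q) (hq1 : q < 1) (hv : 0 < v)
    {i : ℕ} (hi : i ≤ n) (j : Fin r → Fin u) :
    Tj q h r u v i (n - i) j
      = qNum q v ^ i *
        ((-1 : ℝ) ^ (∑ l : Fin r, (j l : ℕ)) *
          (q ^ v : ℝ) ^ (∑ l : Fin r, ((n : ℝ) + h - (l.1 + 1) - i) * (j l : ℕ)) *
          qNum (q ^ v) (∑ l : Fin r, (j l : ℕ) : ℕ) ^ i) := by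
  have hcast : ((∑ l : Fin r, (j l : ℕ) : ℕ) : ℝ) = ∑ l : Fin r, ((j l : ℕ) : ℝ) := by
    push_cast; rfl
  have hni : ((n - i : ℕ) : ℝ) = (n : ℝ) - i := by
    rw [Nat.cast_sub hi]
  have hexpo : (v : ℝ) * (∑ l : Fin r, ((n : ℝ) + h - (l.1 + 1) - i) * ((j l : ℕ) : ℝ))
      = (v : ℝ) * (∑ l : Fin r, ((h : ℝ) - (l.1 + 1)) * ((j l : ℕ) : ℝ))
        + ((v : ℝ) * ((∑ l : Fin r, (j l : ℕ) : ℕ) : ℝ)) * ((n - i : ℕ) : ℝ) := by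
    rw [hcast, hni, Finset.mul_sum, Finset.mul_sum, Finset.mul_sum, Finset.sum_mul,
      ← Finset.sum_add_distrib]
    exact Finset.sum_congr rfl fun l _ => by ring
  unfold Tj
  rw [← qNum_nat_mul hq0 hq1 hv (((∑ l : Fin r, (j l : ℕ)) : ℕ) : ℝ), mul_pow,
    rpow_npow hq0.le ((v : ℝ) * (((∑ l : Fin r, (j l : ℕ)) : ℕ) : ℝ)) (n - i),
    npow_rpow hq0.le v (∑ l : Fin r, ((n : ℝ) + h - (l.1 + 1) - i) * ((j l : ℕ) : ℝ)),
    hexpo, Real.rpow_add hq0]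
  ring

lemma lhs_eq {q x : ℝ} {h : ℤ} {r n u v : ℕ} (hq0 : 0 < q) (hq1 : q < 1)
    (hu : 0 < u) (hv : 0 < v) :
    ∑ i ∈ Finset.range (n + 1),
        (n.choose i : ℝ) * qNum q v ^ i * qNum q u ^ (n - i) *
          qEuler (q ^ u) h r (n - i) ((v : ℝ) * x) * Tsum (q ^ v) h r n i u
      = 2 ^ r * ∑ i ∈ Finset.range (n + 1), ∑ j : Fin r → Fin u, ∑' m : Fin r → ℕ,
          (n.choose i : ℝ) * Em q h r x u v (n - i) m * Tj q h r u v i (n - i) j := by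
  rw [Finset.mul_sum]
  refine Finset.sum_congr rfl fun i hi => ?_
  have hi' : i ≤ n := Nat.lt_succ_iff.mp (Finset.mem_range.mp hi)
  have step1 : ∀ j : Fin r → Fin u,
      (∑' m : Fin r → ℕ, (n.choose i : ℝ) * Em q h r x u v (n - i) m * Tj q h r u v i (n - i) j)
        = ((n.choose i : ℝ) * Tj q h r u v i (n - i) j) * ∑' m, Em q h r x u v (n - i) m := by
    intro j
    rw [← tsum_mul_left]
    exact tsum_congr fun m => by ring
  simp only [step1]
  rw [← Finset.sum_mul]
  have hE : (∑' m : Fin r → ℕ, Em q h r x u v (n - i) m)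
      = qNum q u ^ (n - i) *
          ∑' m : Fin r → ℕ,
            (q ^ u : ℝ) ^ (∑ l : Fin r, ((h : ℝ) - (l.1 + 1)) * (m l : ℝ)) *
              (-1 : ℝ) ^ (∑ l : Fin r, m l) *
              qNum (q ^ u) ((v : ℝ) * x + (∑ l : Fin r, m l : ℕ)) ^ (n - i) := by
    rw [← tsum_mul_left]
    exact tsum_congr fun m => Em_factor hq0 hq1 hu (n - i) m
  have hT : (∑ j : Fin r → Fin u, ((n.choose i : ℝ) * Tj q h r u v i (n - i) j))
      = (n.choose i : ℝ) * (qNum q v ^ i * Tsum (q ^ v) h r n i u) := by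
    rw [Tsum, Finset.mul_sum, Finset.mul_sum]
    refine Finset.sum_congr rfl fun j _ => ?_
    rw [Tj_factor hq0 hq1 hv hi' j]
  rw [hE, hT, qEuler]
  ring

lemma coeff_ge_one {r : ℕ} {h : ℤ} (hh : (r : ℤ) < h) (l : Fin r) :
    (1 : ℝ) ≤ (h : ℝ) - (l.1 + 1) := by
  have h1 : (l.1 : ℤ) + 2 ≤ h := by
    have := l.2
    omega
  have h2 : ((l.1 : ℝ)) + 2 ≤ (h : ℝ) := by exact_mod_cast h1
  linarith

lemma expo_ge {q : ℝ} {r : ℕ} {h : ℤ} (hq0 : 0 < q) (hq1 : q < 1) (hh : (r : ℤ) < h)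
    {c : Fin r → ℕ} {m : Fin r → ℕ} (hc : ∀ l, m l ≤ c l) :
    q ^ (∑ l : Fin r, ((h : ℝ) - (l.1 + 1)) * (c l : ℝ)) ≤ q ^ (∑ l : Fin r, m l) := by
  have hmono : ((∑ l, m l : ℕ) : ℝ) ≤ ∑ l : Fin r, ((h : ℝ) - (l.1 + 1)) * (c l : ℝ) := by
    have t1 : ((∑ l, m l : ℕ) : ℝ) = ∑ l : Fin r, (m l : ℝ) := by push_cast; rfl
    rw [t1]
    refine Finset.sum_le_sum fun l _ => ?_
    have := coeff_ge_one hh l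
    have hml : (m l : ℝ) ≤ (c l : ℝ) := by exact_mod_cast hc l
    nlinarith [(Nat.cast_nonneg (m l) : (0:ℝ) ≤ (m l : ℝ)), (Nat.cast_nonneg (c l) : (0:ℝ) ≤ (c l : ℝ))]
  calc q ^ (∑ l : Fin r, ((h : ℝ) - (l.1 + 1)) * (c l : ℝ))
      ≤ q ^ (((∑ l, m l : ℕ) : ℝ)) :=
        Real.rpow_le_rpow_of_exponent_ge hq0 hq1.le hmono
    _ = q ^ (∑ l : Fin r, m l) := Real.rpow_natCast q (∑ l, m l)

lemma summable_Em {q x : ℝ} {h : ℤ} {r u v : ℕ} (hq0 : 0 < q) (hq1 : q < 1)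
    (hh : (r : ℤ) < h) (hu : 0 < u) (k : ℕ) :
    Summable (Em q h r x u v k) := by
  set K : ℝ := (1 + q ^ ((u : ℝ) * (v : ℝ) * x)) / (1 - q) with hKdef
  have hK0 : 0 ≤ K := by
    have : (0:ℝ) < q ^ ((u : ℝ) * (v : ℝ) * x) := Real.rpow_pos_of_pos hq0 _
    have : (0:ℝ) < 1 - q := by linarith
    positivity
  refine Summable.of_norm_bounded (g := fun m : Fin r → ℕ => K ^ k * q ^ (∑ l, m l))
    ((summable_base hq0.le hq1 r).mul_left _) fun m => ?_
  have e1 : |q ^ ((u : ℝ) * ∑ l : Fin r, ((h : ℝ) - (l.1 + 1)) * (m l : ℝ))|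
      ≤ q ^ (∑ l, m l) := by
    rw [abs_of_pos (Real.rpow_pos_of_pos hq0 _)]
    have hone : (1:ℝ) ≤ (u:ℝ) := by exact_mod_cast hu
    have hS : (0:ℝ) ≤ ∑ l : Fin r, ((h : ℝ) - (l.1 + 1)) * (m l : ℝ) :=
      Finset.sum_nonneg fun l _ => mul_nonneg (by linarith [coeff_ge_one hh l]) (Nat.cast_nonneg _)
    calc q ^ ((u : ℝ) * ∑ l : Fin r, ((h : ℝ) - (l.1 + 1)) * (m l : ℝ))
        ≤ q ^ (∑ l : Fin r, ((h : ℝ) - (l.1 + 1)) * (m l : ℝ)) := by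
          apply Real.rpow_le_rpow_of_exponent_ge hq0 hq1.le
          nlinarith
      _ ≤ q ^ (∑ l, m l) := expo_ge hq0 hq1 hh fun l => le_refl _
  have e2 : |qNum q ((u : ℝ) * (v : ℝ) * x + (u : ℝ) * ((∑ l, m l : ℕ) : ℝ))| ≤ K := by
    have harg : (u : ℝ) * ((∑ l, m l : ℕ) : ℝ) = ((u * (∑ l, m l) : ℕ) : ℝ) := by push_cast; ring
    rw [harg, hKdef]
    exact abs_qNum_le hq0 hq1 _ _
  rw [Real.norm_eq_abs, Em, abs_mul, abs_mul, abs_pow, abs_pow, abs_neg, abs_one, one_pow,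
    mul_one]
  show _ ≤ K ^ k * q ^ (∑ l, m l)
  refine le_trans (mul_le_mul e1 (pow_le_pow_left₀ (abs_nonneg _) e2 k)
    (pow_nonneg (abs_nonneg _) k) (pow_nonneg hq0.le _)) (le_of_eq (mul_comm _ _))

noncomputable def gMas (q : ℝ) (h : ℤ) (r n : ℕ) (x : ℝ) (u v : ℕ)
    (p : (Fin r → ℕ) × (Fin r → Fin u)) : ℝ :=
  (-1 : ℝ) ^ ((∑ l, p.1 l) + ∑ l, ((p.2 l : ℕ))) *
    q ^ (∑ l : Fin r, ((h : ℝ) - (l.1 + 1)) * (((u * p.1 l + v * (p.2 l : ℕ) : ℕ)) : ℝ)) *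
    qNum q ((u : ℝ) * (v : ℝ) * x + (((∑ l, (u * p.1 l + v * (p.2 l : ℕ)) : ℕ)) : ℝ)) ^ n

lemma master_def (q : ℝ) (h : ℤ) (r n : ℕ) (x : ℝ) (u v : ℕ) :
    master q h r n x u v = 2 ^ r * ∑' p, gMas q h r n x u v p := rfl

lemma summable_gMas {q x : ℝ} {h : ℤ} {r n u v : ℕ} (hq0 : 0 < q) (hq1 : q < 1)
    (hh : (r : ℤ) < h) (hu : 0 < u) :
    Summable (gMas q h r n x u v) := by
  set K : ℝ := (1 + q ^ ((u : ℝ) * (v : ℝ) * x)) / (1 - q) with hKdef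
  have hK0 : 0 ≤ K := by
    have h1 : (0:ℝ) < q ^ ((u : ℝ) * (v : ℝ) * x) := Real.rpow_pos_of_pos hq0 _
    have h2 : (0:ℝ) < 1 - q := by linarith
    positivity
  have hmaj : Summable (fun p : (Fin r → ℕ) × (Fin r → Fin u) =>
      (K ^ n * q ^ (∑ l, p.1 l)) * (1 : ℝ)) := by
    refine Summable.mul_of_nonneg (f := fun m : Fin r → ℕ => K ^ n * q ^ (∑ l, m l))
      (g := fun _ : Fin r → Fin u => (1 : ℝ))
      ((summable_base hq0.le hq1 r).mul_left _) Summable.of_finite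
      (fun m => by positivity) (fun _ => zero_le_one)
  refine Summable.of_norm_bounded hmaj fun p => ?_
  obtain ⟨m, j⟩ := p
  have e1 : |q ^ (∑ l : Fin r, ((h : ℝ) - (l.1 + 1)) * (((u * m l + v * (j l : ℕ) : ℕ)) : ℝ))|
      ≤ q ^ (∑ l, m l) := by
    rw [abs_of_pos (Real.rpow_pos_of_pos hq0 _)]
    have hrw : (∑ l : Fin r, ((h : ℝ) - (l.1 + 1)) * (((u * m l + v * (j l : ℕ) : ℕ)) : ℝ))
        = ∑ l : Fin r, ((h : ℝ) - (l.1 + 1)) * (((fun l => u * m l + v * (j l : ℕ)) l : ℕ) : ℝ) := rfl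
    rw [hrw]
    refine expo_ge hq0 hq1 hh fun l => ?_
    have : m l ≤ u * m l := Nat.le_mul_of_pos_left _ hu
    omega
  have e2 : |qNum q ((u : ℝ) * (v : ℝ) * x + (((∑ l, (u * m l + v * (j l : ℕ)) : ℕ)) : ℝ))| ≤ K :=
    abs_qNum_le hq0 hq1 _ _
  rw [Real.norm_eq_abs, gMas, abs_mul, abs_mul, abs_pow, abs_neg, abs_one, one_pow, one_mul,
    abs_pow]
  show _ ≤ K ^ n * q ^ (∑ l, m l) * 1
  rw [mul_one, mul_comm (K ^ n)]
  exact mul_le_mul e1 (pow_le_pow_left₀ (abs_nonneg _) e2 n)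
    (pow_nonneg (abs_nonneg _) n) (pow_nonneg hq0.le _)

lemma g_split {q x : ℝ} {h : ℤ} {r n u v : ℕ} (hq0 : 0 < q)
    (m : Fin r → ℕ) (j : Fin r → Fin u) :
    gMas q h r n x u v (m, j)
      = ∑ i ∈ Finset.range (n + 1),
          (n.choose i : ℝ) * Em q h r x u v (n - i) m * Tj q h r u v i (n - i) j := by
  have harg : (u : ℝ) * (v : ℝ) * x + (((∑ l, (u * m l + v * (j l : ℕ)) : ℕ)) : ℝ)
      = ((u : ℝ) * (v : ℝ) * x + (u : ℝ) * ((∑ l, m l : ℕ) : ℝ))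
        + (v : ℝ) * ((∑ l, ((j l : ℕ)) : ℕ) : ℝ) := by
    push_cast [Finset.sum_add_distrib, Finset.mul_sum]
    ring
  have hexpo : (∑ l : Fin r, ((h : ℝ) - (l.1 + 1)) * (((u * m l + v * (j l : ℕ) : ℕ)) : ℝ))
      = (u : ℝ) * (∑ l : Fin r, ((h : ℝ) - (l.1 + 1)) * (m l : ℝ))
        + (v : ℝ) * (∑ l : Fin r, ((h : ℝ) - (l.1 + 1)) * ((j l : ℕ) : ℝ)) := by
    rw [Finset.mul_sum, Finset.mul_sum, ← Finset.sum_add_distrib]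
    refine Finset.sum_congr rfl fun l _ => ?_
    push_cast
    ring
  rw [gMas]
  show (-1 : ℝ) ^ ((∑ l, m l) + ∑ l, ((j l : ℕ))) * _ * _ = _
  have key : ∀ (pref : ℝ) (f : ℕ → ℝ),
      pref * (∑ i ∈ Finset.range (n + 1), f i) = ∑ i ∈ Finset.range (n + 1), pref * f i :=
    fun pref f => Finset.mul_sum _ _ _
  rw [harg, hexpo, Real.rpow_add hq0, qNum_add hq0, add_pow, pow_add, key]
  refine Finset.sum_congr rfl fun i hi => ?_
  rw [Em, Tj, mul_pow]
  ring

lemma summable_fmid {q x : ℝ} {h : ℤ} {r n u v : ℕ} (hq0 : 0 < q) (hq1 : q < 1)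
    (hh : (r : ℤ) < h) (hu : 0 < u) (i : ℕ) (j : Fin r → Fin u) :
    Summable (fun m : Fin r → ℕ =>
      (n.choose i : ℝ) * Em q h r x u v (n - i) m * Tj q h r u v i (n - i) j) := by
  have := ((summable_Em (x := x) (v := v) hq0 hq1 hh hu (n - i)).mul_left
    (n.choose i : ℝ)).mul_right (Tj q h r u v i (n - i) j)
  exact this

lemma master_eq {q x : ℝ} {h : ℤ} {r n u v : ℕ} (hq0 : 0 < q) (hq1 : q < 1)
    (hh : (r : ℤ) < h) (hu : 0 < u) :
    master q h r n x u v
      = 2 ^ r * ∑ i ∈ Finset.range (n + 1), ∑ j : Fin r → Fin u, ∑' m : Fin r → ℕ,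
          (n.choose i : ℝ) * Em q h r x u v (n - i) m * Tj q h r u v i (n - i) j := by
  rw [master_def]
  congr 1
  calc (∑' p, gMas q h r n x u v p)
      = ∑' m : Fin r → ℕ, ∑' j : Fin r → Fin u, gMas q h r n x u v (m, j) :=
        Summable.tsum_prod' (summable_gMas hq0 hq1 hh hu) (fun m => Summable.of_finite)
    _ = ∑' m : Fin r → ℕ, ∑ j : Fin r → Fin u, gMas q h r n x u v (m, j) :=
        tsum_congr fun m => tsum_fintype _
    _ = ∑' m : Fin r → ℕ, ∑ j : Fin r → Fin u, ∑ i ∈ Finset.range (n + 1),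
          (n.choose i : ℝ) * Em q h r x u v (n - i) m * Tj q h r u v i (n - i) j :=
        tsum_congr fun m => Finset.sum_congr rfl fun j _ => g_split hq0 m j
    _ = ∑ j : Fin r → Fin u, ∑' m : Fin r → ℕ, ∑ i ∈ Finset.range (n + 1),
          (n.choose i : ℝ) * Em q h r x u v (n - i) m * Tj q h r u v i (n - i) j :=
        Summable.tsum_finsetSum fun j _ => summable_sum fun i _ => summable_fmid hq0 hq1 hh hu i j
    _ = ∑ j : Fin r → Fin u, ∑ i ∈ Finset.range (n + 1), ∑' m : Fin r → ℕ,
          (n.choose i : ℝ) * Em q h r x u v (n - i) m * Tj q h r u v i (n - i) j :=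
        Finset.sum_congr rfl fun j _ => Summable.tsum_finsetSum fun i _ => summable_fmid hq0 hq1 hh hu i j
    _ = ∑ i ∈ Finset.range (n + 1), ∑ j : Fin r → Fin u, ∑' m : Fin r → ℕ,
          (n.choose i : ℝ) * Em q h r x u v (n - i) m * Tj q h r u v i (n - i) j :=
        Finset.sum_comm

theorem qEuler_second_symmetry (q x : ℝ) (hq0 : 0 < q) (hq1 : q < 1)
    (r : ℕ) (hr : 1 ≤ r) (h : ℤ) (hh : (r : ℤ) < h) (n : ℕ)
    (w₁ w₂ : ℕ) (hw₁ : Odd w₁) (hw₂ : Odd w₂) (hw₁' : 0 < w₁) (hw₂' : 0 < w₂) :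
    ∑ i ∈ Finset.range (n + 1),
        (n.choose i : ℝ) * qNum q w₂ ^ i * qNum q w₁ ^ (n - i) *
          qEuler (q ^ w₁) h r (n - i) ((w₂ : ℝ) * x) * Tsum (q ^ w₂) h r n i w₁
      = ∑ i ∈ Finset.range (n + 1),
          (n.choose i : ℝ) * qNum q w₁ ^ i * qNum q w₂ ^ (n - i) *
            qEuler (q ^ w₂) h r (n - i) ((w₁ : ℝ) * x) * Tsum (q ^ w₁) h r n i w₂ := by
  have key : ∀ u v : ℕ, 0 < u → 0 < v →
      (∑ i ∈ Finset.range (n + 1),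
        (n.choose i : ℝ) * qNum q v ^ i * qNum q u ^ (n - i) *
          qEuler (q ^ u) h r (n - i) ((v : ℝ) * x) * Tsum (q ^ v) h r n i u)
        = master q h r n x u v := fun u v hu hv =>
    (lhs_eq hq0 hq1 hu hv).trans (master_eq hq0 hq1 hh hu).symm
  rw [key w₁ w₂ hw₁' hw₂', key w₂ w₁ hw₂' hw₁',
    master_symm q h r n x w₁ w₂ hw₁' hw₂' hw₁ hw₂]
end
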